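/- Assume θ_i = 0 for all i, common d^max > 0, strictly increasing remaining metric m_i := (ξ_i ℓ_i)^{-1} - ε_i, and suppose there exists a user j with (I-j)·d^max ≤ m_j ≤ (I-j+1)·d^max. Then the profile d_i* = 0 for i < j, d_j* = m_j - (I-j)·d^max, d_i* = d^max for i > j is a Nash equilibrium of the game. -/

import Mathlib

open Finset

/-- Payoff with negligible unlearning costs (`θ_i = 0`). -/
noncomputable def payoff0 {I : ℕ} (ξ ℓ ε : Fin I → ℝ) (i : Fin I)
    (d : Fin I → ℝ) : ℝ :=
  Real.log (∑ j, d j + ε i) - ξ i * ℓ i * d i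

/-- Nash equilibrium of the game with common maximum data size `dmax`. -/
def IsNash0 {I : ℕ} (ξ ℓ ε : Fin I → ℝ) (dmax : ℝ) (d : Fin I → ℝ) : Prop :=
  ∀ i : Fin I, ∀ x ∈ Set.Icc (0 : ℝ) dmax,
    payoff0 ξ ℓ ε i (Function.update d i x) ≤ payoff0 ξ ℓ ε i d

lemma key_log (a t c : ℝ) (ha : 0 < a) (hat : 0 < a + t)
    (hs : t * (1 - c * a) ≤ 0) :
    Real.log (a + t) ≤ Real.log a + c * t := by
  have h := Real.log_le_sub_one_of_pos (div_pos hat ha)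
  rw [Real.log_div hat.ne' ha.ne'] at h
  have h1 : (a + t) / a - 1 = t / a := by field_simp; ring
  have h2 : t / a - c * t = t * (1 - c * a) / a := by field_simp
  have h3 : t * (1 - c * a) / a ≤ 0 := div_nonpos_of_nonpos_of_nonneg hs ha.le
  linarith

/-- Theorem 2 case (i), existence: with remaining metric
`m i = (ξ_i ℓ_i)⁻¹ - ε_i` strictly increasing, if a (0-indexed) user `j`
satisfies `(I-j-1) d^max ≤ m j ≤ (I-j) d^max` (the paper's `(I-j) d^max ≤ m_j ≤
(I-j+1) d^max` in 1-indexed form), then the profile where users before `j`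
fully revoke, user `j` keeps `m j - (I-j-1) d^max`, and users after `j` keep
everything, is a Nash equilibrium. -/
theorem stmt11 (I : ℕ) (ξ ℓ ε : Fin I → ℝ) (dmax : ℝ)
    (hξ : ∀ i, 0 < ξ i) (hℓ : ∀ i, 0 < ℓ i) (hε : ∀ i, 0 < ε i)
    (hdmax : 0 < dmax)
    (m : Fin I → ℝ) (hm : ∀ i, m i = (ξ i * ℓ i)⁻¹ - ε i)
    (horder : ∀ i k : Fin I, i < k → m i < m k)
    (j : Fin I)
    (hlo : ((I : ℝ) - (j : ℕ) - 1) * dmax ≤ m j)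
    (hhi : m j ≤ ((I : ℝ) - (j : ℕ)) * dmax) :
    IsNash0 ξ ℓ ε dmax (fun i =>
      if i < j then 0
      else if i = j then m j - ((I : ℝ) - (j : ℕ) - 1) * dmax
      else dmax) := by
  set D : Fin I → ℝ := fun k =>
      if k < j then 0
      else if k = j then m j - ((I : ℝ) - (j : ℕ) - 1) * dmax
      else dmax with hDdef
  have hjI : (j : ℕ) < I := j.isLt
  have hjI' : ((j : ℕ) : ℝ) + 1 ≤ (I : ℝ) := by exact_mod_cast hjI
  have hsum : ∑ k, D k = m j := by
    have h1 : ∀ k, D k =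
        (if k = j then m j - ((I : ℝ) - (j : ℕ) - 1) * dmax else 0) +
        (if j < k then dmax else 0) := by
      intro k
      rcases lt_trichotomy k j with h | h | h
      · simp [hDdef, h, h.ne, not_lt.mpr h.le]
      · simp [hDdef, h]
      · simp [hDdef, h, h.ne', not_lt.mpr h.le]
    rw [Finset.sum_congr rfl fun k _ => h1 k, Finset.sum_add_distrib,
      Finset.sum_ite_eq' univ j]
    rw [Finset.sum_ite, Finset.sum_const, Finset.sum_const,
      show (filter (fun x => j < x) univ) = Ioi j by ext x; simp, Fin.card_Ioi]
    have hcast : ((I - 1 - (j : ℕ) : ℕ) : ℝ) = (I : ℝ) - (j : ℕ) - 1 := by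
      rw [Nat.sub_sub, Nat.cast_sub (by omega)]
      push_cast; ring
    simp only [Finset.mem_univ, if_true, smul_eq_mul, smul_zero, mul_zero,
      add_zero, nsmul_eq_mul]
    rw [hcast]; ring
  intro i x hx
  obtain ⟨hx0, hx1⟩ := hx
  have hc : 0 < ξ i * ℓ i := mul_pos (hξ i) (hℓ i)
  have hmc : ξ i * ℓ i * (m i + ε i) = 1 := by
    rw [hm i]; simp only [sub_add_cancel]; exact mul_inv_cancel₀ hc.ne'
  have hIj1 : (0 : ℝ) ≤ (I : ℝ) - (j : ℕ) - 1 := by linarith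
  have hmj0 : 0 ≤ m j := le_trans (by nlinarith) hlo
  have ha : 0 < m j + ε i := by linarith [hε i]
  have hupd : ∑ k, Function.update D i x k = m j - D i + x := by
    rw [Finset.sum_update_of_mem (Finset.mem_univ i),
      Finset.sdiff_singleton_eq_erase,
      Finset.sum_erase_eq_sub (Finset.mem_univ i), hsum]
    ring
  have hmain : ∀ (hat : 0 < m j + ε i + (x - D i))
      (hs : (x - D i) * (1 - ξ i * ℓ i * (m j + ε i)) ≤ 0),
      payoff0 ξ ℓ ε i (Function.update D i x) ≤ payoff0 ξ ℓ ε i D := by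
    intro hat hs
    have h := key_log (m j + ε i) (x - D i) (ξ i * ℓ i) ha hat hs
    rw [show m j + ε i + (x - D i) = m j - D i + x + ε i by ring] at h
    simp only [payoff0, hupd, hsum, Function.update_self]
    nlinarith
  rcases lt_trichotomy i j with h | h | h
  · -- i < j
    have hDi : D i = 0 := by simp [hDdef, h]
    have hmij : m i < m j := horder i j h
    apply hmain
    · rw [hDi]; linarith [hε i]
    · rw [hDi]
      have h1 : 1 < ξ i * ℓ i * (m j + ε i) := by nlinarith
      nlinarith
  · -- i = j
    have hDi : D i = m j - ((I : ℝ) - (j : ℕ) - 1) * dmax := by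
      simp [hDdef, h]
    apply hmain
    · rw [hDi]; subst h; nlinarith [hε i]
    · subst h; rw [hmc]; simp
  · -- j < i
    have hDi : D i = dmax := by simp [hDdef, h.ne', not_lt.mpr h.le]
    have hmij : m j < m i := horder j i h
    have hij2 : ((j : ℕ) : ℝ) + 2 ≤ (I : ℝ) := by
      have h1 : (j : ℕ) + 2 ≤ I := by
        have := h
        have hiI : (i : ℕ) < I := i.isLt
        have : (j : ℕ) < (i : ℕ) := h
        omega
      exact_mod_cast h1
    have hmjd : dmax ≤ m j := by nlinarith
    apply hmain
    · rw [hDi]; linarith [hε i]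
    · rw [hDi]
      have h1 : ξ i * ℓ i * (m j + ε i) < 1 := by nlinarith
      nlinarith
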